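/- Let U' = {(z₁, z₂) ∈ ℂ² : z₁ + z̄₁ − 2z₂z̄₂ > 0} and define K : U' → ℝ by K = log(v − 2z₂z̄₂) where v = z₁ + z̄₁. Then K depends on z₁ only through v, and with K_v = ∂K/∂v, K_vv = ∂²K/∂v², K_{v2} = ∂²K/∂v∂z₂, K_{v2̄} = ∂²K/∂v∂z̄₂, K_{22̄} = ∂²K/∂z₂∂z̄₂ (Wirtinger derivatives in z₂), one has: K_v e^{K} = 1, K_v > 0, K_vv < 0 (so εK_vv > 0 with ε = −1), and K satisfies the Przanowski equation K_vv K_{22̄} − K_{v2̄} K_{v2} − 2e^{−K}(K_vv + 2(K_v)²) = 0 everywhere on U'. -/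

import Mathlib

noncomputable section

/-- `w(z₁,z₂) = v − 2z₂z̄₂` where `v = z₁ + z̄₁ = 2 Re z₁`. -/
def wDef (p : ℂ × ℂ) : ℝ := 2 * p.1.re - 2 * Complex.normSq p.2

/-- The region `U' = {(z₁,z₂) ∈ ℂ² : v − 2z₂z̄₂ > 0}`. -/
def Uprime : Set (ℂ × ℂ) := {p | 0 < wDef p}

/-- `K = log(v − 2z₂z̄₂)`. -/
def KDef (p : ℂ × ℂ) : ℝ := Real.log (wDef p)

/-- `K` as a function of `v` at fixed `z₂`. -/
def KofV (z₂ : ℂ) (v : ℝ) : ℝ := Real.log (v - 2 * Complex.normSq z₂)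

/-- `K_v = ∂K/∂v`. -/
def Kv (p : ℂ × ℂ) : ℝ := deriv (KofV p.2) (2 * p.1.re)

/-- `K_vv = ∂²K/∂v²`. -/
def Kvv (p : ℂ × ℂ) : ℝ := deriv (deriv (KofV p.2)) (2 * p.1.re)

/-- The Wirtinger derivative `∂G/∂z = ½(∂_x G − i ∂_y G)` of `G : ℂ → ℂ` at `c`. -/
def wirtD (G : ℂ → ℂ) (c : ℂ) : ℂ :=
  (deriv (fun x : ℝ => G ((x : ℂ) + (c.im : ℂ) * Complex.I)) c.re -
    Complex.I * deriv (fun y : ℝ => G ((c.re : ℂ) + (y : ℂ) * Complex.I)) c.im) / 2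

/-- The Wirtinger derivative `∂G/∂z̄ = ½(∂_x G + i ∂_y G)` of `G : ℂ → ℂ` at `c`. -/
def wirtDbar (G : ℂ → ℂ) (c : ℂ) : ℂ :=
  (deriv (fun x : ℝ => G ((x : ℂ) + (c.im : ℂ) * Complex.I)) c.re +
    Complex.I * deriv (fun y : ℝ => G ((c.re : ℂ) + (y : ℂ) * Complex.I)) c.im) / 2

/-- `K_{v2} = ∂²K/∂v∂z₂` (Wirtinger derivative in `z₂` of `K_v`). -/
def Kv2 (p : ℂ × ℂ) : ℂ :=
  wirtD (fun z₂ => ((deriv (KofV z₂) (2 * p.1.re) : ℝ) : ℂ)) p.2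

/-- `K_{v2̄} = ∂²K/∂v∂z̄₂`. -/
def Kv2bar (p : ℂ × ℂ) : ℂ :=
  wirtDbar (fun z₂ => ((deriv (KofV z₂) (2 * p.1.re) : ℝ) : ℂ)) p.2

/-- `K_{22̄} = ∂²K/∂z₂∂z̄₂` (at fixed `v`). -/
def K22bar (p : ℂ × ℂ) : ℂ :=
  wirtDbar (fun z₂ =>
    wirtD (fun u => ((Real.log (2 * p.1.re - 2 * Complex.normSq u) : ℝ) : ℂ)) z₂) p.2

/-- The 1-form `dz₁ − 2z̄₂dz₂` evaluated on a real tangent vector `X ∈ ℂ² ≅ ℝ⁴`. -/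
def AForm (p : ℂ × ℂ) (X : ℂ × ℂ) : ℂ := X.1 - 2 * starRingEnd ℂ p.2 * X.2

/-- The explicit Ricci-flat metric
`g = (v − 2z₂z̄₂)^{−1/2}(dz₁ − 2z̄₂dz₂)(dz̄₁ − 2z₂dz̄₂) + 4(v − 2z₂z̄₂)^{1/2} dz₂ dz̄₂`
(with `2αβ = α⊗β + β⊗α`) on real tangent vectors. -/
def gExpl (p : ℂ × ℂ) (X Y : ℂ × ℂ) : ℝ :=
  1 / Real.sqrt (wDef p) * (AForm p X * starRingEnd ℂ (AForm p Y)).re +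
    4 * Real.sqrt (wDef p) * (X.2 * starRingEnd ℂ Y.2).re

/-- The almost complex structure
`J⁺_{e^{iφ}} = 2Re{ i e^{iφ} [ (2(v − 2z₂z̄₂)^{1/2})^{−1}(dz₁ − 2z̄₂dz₂) ⊗ (∂_{z̄₂} + 2z₂∂_{z̄₁}) − 2(v − 2z₂z̄₂)^{1/2} dz₂ ⊗ ∂_{z̄₁} ] }`
as a real endomorphism of the tangent space `ℂ² ≅ ℝ⁴`: a real tangent vector `X`
corresponds to `X.1 ∂_{z₁} + conj X.1 ∂_{z̄₁} + X.2 ∂_{z₂} + conj X.2 ∂_{z̄₂}` in the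
complexified tangent space; the components below are the `∂_{z₁}`- and
`∂_{z₂}`-coefficients of `(T + T̄)(X)`. -/
def JExpl (φ : ℝ) (p : ℂ × ℂ) (X : ℂ × ℂ) : ℂ × ℂ :=
  (starRingEnd ℂ (Complex.I * Complex.exp ((φ : ℂ) * Complex.I) *
      (AForm p X / (2 * (Real.sqrt (wDef p) : ℂ)) * (2 * p.2) -
        2 * (Real.sqrt (wDef p) : ℂ) * X.2)),
   starRingEnd ℂ (Complex.I * Complex.exp ((φ : ℂ) * Complex.I) *
      (AForm p X / (2 * (Real.sqrt (wDef p) : ℂ)))))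

namespace PrzAux

open Complex Filter Real

lemma hasDerivAt_log_sub (c v : ℝ) (h : v - c ≠ 0) :
    HasDerivAt (fun v : ℝ => Real.log (v - c)) (v - c)⁻¹ v := by
  simpa [Function.comp_def] using (Real.hasDerivAt_log h).comp v ((hasDerivAt_id v).sub_const c)

lemma deriv_KofV (z₂ : ℂ) (v : ℝ) (h : v - 2 * Complex.normSq z₂ ≠ 0) :
    deriv (KofV z₂) v = (v - 2 * Complex.normSq z₂)⁻¹ := by
  have h1 : KofV z₂ = fun v : ℝ => Real.log (v - 2 * Complex.normSq z₂) := rfl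
  rw [h1, (hasDerivAt_log_sub _ _ h).deriv]

lemma deriv2_KofV (z₂ : ℂ) (v : ℝ) (h : 0 < v - 2 * Complex.normSq z₂) :
    deriv (deriv (KofV z₂)) v = -((v - 2 * Complex.normSq z₂) ^ 2)⁻¹ := by
  have hev : ∀ᶠ u in nhds v, 2 * Complex.normSq z₂ < u :=
    eventually_gt_nhds (by linarith)
  have hEq : deriv (KofV z₂) =ᶠ[nhds v] fun u => (u - 2 * Complex.normSq z₂)⁻¹ :=
    hev.mono fun u hu => deriv_KofV z₂ u (by linarith)
  rw [hEq.deriv_eq]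
  have h2 := (hasDerivAt_inv (show v - 2 * Complex.normSq z₂ ≠ 0 by linarith)).comp v
    ((hasDerivAt_id v).sub_const (2 * Complex.normSq z₂))
  simpa [Function.comp_def] using h2.deriv

lemma evx (v y x₀ : ℝ) (h : 0 < v - 2 * (x₀ ^ 2 + y ^ 2)) :
    ∀ᶠ x in nhds x₀, 0 < v - 2 * (x ^ 2 + y ^ 2) := by
  have hc : Continuous fun x : ℝ => v - 2 * (x ^ 2 + y ^ 2) := by continuity
  exact (hc.tendsto x₀).eventually (eventually_gt_nhds h)

lemma evy (v x y₀ : ℝ) (h : 0 < v - 2 * (x ^ 2 + y₀ ^ 2)) :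
    ∀ᶠ y in nhds y₀, 0 < v - 2 * (x ^ 2 + y ^ 2) := by
  have hc : Continuous fun y : ℝ => v - 2 * (x ^ 2 + y ^ 2) := by continuity
  exact (hc.tendsto y₀).eventually (eventually_gt_nhds h)

lemma hqx (v y x₀ : ℝ) : HasDerivAt (fun x : ℝ => v - 2 * (x ^ 2 + y ^ 2)) (-(4 * x₀)) x₀ := by
  have h := (((hasDerivAt_pow 2 x₀).add_const (y ^ 2)).const_mul 2).const_sub v
  refine h.congr_deriv ?_
  push_cast; ring

lemma hqy (v x y₀ : ℝ) : HasDerivAt (fun y : ℝ => v - 2 * (x ^ 2 + y ^ 2)) (-(4 * y₀)) y₀ := by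
  have h := (((hasDerivAt_pow 2 y₀).const_add (x ^ 2)).const_mul 2).const_sub v
  refine h.congr_deriv ?_
  push_cast; ring

lemma hinvx (v y x₀ : ℝ) (h : 0 < v - 2 * (x₀ ^ 2 + y ^ 2)) :
    HasDerivAt (fun x : ℝ => (v - 2 * (x ^ 2 + y ^ 2))⁻¹)
      (4 * x₀ / (v - 2 * (x₀ ^ 2 + y ^ 2)) ^ 2) x₀ := by
  have h2 := (hasDerivAt_inv h.ne').comp x₀ (hqx v y x₀)
  refine h2.congr_deriv ?_
  field_simp

lemma hinvy (v x y₀ : ℝ) (h : 0 < v - 2 * (x ^ 2 + y₀ ^ 2)) :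
    HasDerivAt (fun y : ℝ => (v - 2 * (x ^ 2 + y ^ 2))⁻¹)
      (4 * y₀ / (v - 2 * (x ^ 2 + y₀ ^ 2)) ^ 2) y₀ := by
  have h2 := (hasDerivAt_inv h.ne').comp y₀ (hqy v x y₀)
  refine h2.congr_deriv ?_
  field_simp

lemma hlogx (v y x₀ : ℝ) (h : 0 < v - 2 * (x₀ ^ 2 + y ^ 2)) :
    HasDerivAt (fun x : ℝ => Real.log (v - 2 * (x ^ 2 + y ^ 2)))
      (-(4 * x₀) / (v - 2 * (x₀ ^ 2 + y ^ 2))) x₀ := by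
  have h2 := (Real.hasDerivAt_log h.ne').comp x₀ (hqx v y x₀)
  refine h2.congr_deriv ?_
  field_simp

lemma hlogy (v x y₀ : ℝ) (h : 0 < v - 2 * (x ^ 2 + y₀ ^ 2)) :
    HasDerivAt (fun y : ℝ => Real.log (v - 2 * (x ^ 2 + y ^ 2)))
      (-(4 * y₀) / (v - 2 * (x ^ 2 + y₀ ^ 2))) y₀ := by
  have h2 := (Real.hasDerivAt_log h.ne').comp y₀ (hqy v x y₀)
  refine h2.congr_deriv ?_
  field_simp

lemma Kv_eq (p : ℂ × ℂ) (hp : 0 < wDef p) : Kv p = (wDef p)⁻¹ := by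
  have h : 2 * p.1.re - 2 * Complex.normSq p.2 ≠ 0 := by
    have : 0 < 2 * p.1.re - 2 * Complex.normSq p.2 := hp
    exact this.ne'
  unfold Kv
  rw [deriv_KofV _ _ h]
  rfl

lemma Kvv_eq (p : ℂ × ℂ) (hp : 0 < wDef p) : Kvv p = -((wDef p) ^ 2)⁻¹ := by
  have h : 0 < 2 * p.1.re - 2 * Complex.normSq p.2 := hp
  unfold Kvv
  rw [deriv2_KofV _ _ h]
  rfl

lemma Kv2_eq (p : ℂ × ℂ) (hp : 0 < wDef p) :
    Kv2 p = 2 * ((p.2.re : ℂ) - (p.2.im : ℂ) * Complex.I) * ((((wDef p) ^ 2)⁻¹ : ℝ) : ℂ) := by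
  have hw : wDef p = 2 * p.1.re - 2 * (p.2.re ^ 2 + p.2.im ^ 2) := by
    simp only [wDef, Complex.normSq_apply]; ring
  have hpos : 0 < 2 * p.1.re - 2 * (p.2.re ^ 2 + p.2.im ^ 2) := hw ▸ hp
  simp only [Kv2, wirtD]
  have hDx : deriv (fun x : ℝ =>
        ((deriv (KofV ((x : ℂ) + (p.2.im : ℂ) * Complex.I)) (2 * p.1.re) : ℝ) : ℂ)) p.2.re
      = ((4 * p.2.re / (wDef p) ^ 2 : ℝ) : ℂ) := by
    have hEq : (fun x : ℝ =>
          ((deriv (KofV ((x : ℂ) + (p.2.im : ℂ) * Complex.I)) (2 * p.1.re) : ℝ) : ℂ))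
        =ᶠ[nhds p.2.re]
          fun x : ℝ => (((2 * p.1.re - 2 * (x ^ 2 + p.2.im ^ 2))⁻¹ : ℝ) : ℂ) := by
      filter_upwards [evx (2 * p.1.re) p.2.im p.2.re hpos] with x hx
      rw [deriv_KofV _ _ (by rw [Complex.normSq_add_mul_I]; exact hx.ne'),
        Complex.normSq_add_mul_I]
    rw [hEq.deriv_eq, hw]
    exact ((hinvx _ _ _ hpos).ofReal_comp).deriv
  have hDy : deriv (fun y : ℝ =>
        ((deriv (KofV ((p.2.re : ℂ) + (y : ℂ) * Complex.I)) (2 * p.1.re) : ℝ) : ℂ)) p.2.im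
      = ((4 * p.2.im / (wDef p) ^ 2 : ℝ) : ℂ) := by
    have hEq : (fun y : ℝ =>
          ((deriv (KofV ((p.2.re : ℂ) + (y : ℂ) * Complex.I)) (2 * p.1.re) : ℝ) : ℂ))
        =ᶠ[nhds p.2.im]
          fun y : ℝ => (((2 * p.1.re - 2 * (p.2.re ^ 2 + y ^ 2))⁻¹ : ℝ) : ℂ) := by
      filter_upwards [evy (2 * p.1.re) p.2.re p.2.im hpos] with y hy
      rw [deriv_KofV _ _ (by rw [Complex.normSq_add_mul_I]; exact hy.ne'),
        Complex.normSq_add_mul_I]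
    rw [hEq.deriv_eq, hw]
    exact ((hinvy _ _ _ hpos).ofReal_comp).deriv
  rw [hDx, hDy]
  push_cast
  ring

lemma Kv2bar_eq (p : ℂ × ℂ) (hp : 0 < wDef p) :
    Kv2bar p = 2 * ((p.2.re : ℂ) + (p.2.im : ℂ) * Complex.I) * ((((wDef p) ^ 2)⁻¹ : ℝ) : ℂ) := by
  have hw : wDef p = 2 * p.1.re - 2 * (p.2.re ^ 2 + p.2.im ^ 2) := by
    simp only [wDef, Complex.normSq_apply]; ring
  have hpos : 0 < 2 * p.1.re - 2 * (p.2.re ^ 2 + p.2.im ^ 2) := hw ▸ hp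
  simp only [Kv2bar, wirtDbar]
  have hDx : deriv (fun x : ℝ =>
        ((deriv (KofV ((x : ℂ) + (p.2.im : ℂ) * Complex.I)) (2 * p.1.re) : ℝ) : ℂ)) p.2.re
      = ((4 * p.2.re / (wDef p) ^ 2 : ℝ) : ℂ) := by
    have hEq : (fun x : ℝ =>
          ((deriv (KofV ((x : ℂ) + (p.2.im : ℂ) * Complex.I)) (2 * p.1.re) : ℝ) : ℂ))
        =ᶠ[nhds p.2.re]
          fun x : ℝ => (((2 * p.1.re - 2 * (x ^ 2 + p.2.im ^ 2))⁻¹ : ℝ) : ℂ) := by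
      filter_upwards [evx (2 * p.1.re) p.2.im p.2.re hpos] with x hx
      rw [deriv_KofV _ _ (by rw [Complex.normSq_add_mul_I]; exact hx.ne'),
        Complex.normSq_add_mul_I]
    rw [hEq.deriv_eq, hw]
    exact ((hinvx _ _ _ hpos).ofReal_comp).deriv
  have hDy : deriv (fun y : ℝ =>
        ((deriv (KofV ((p.2.re : ℂ) + (y : ℂ) * Complex.I)) (2 * p.1.re) : ℝ) : ℂ)) p.2.im
      = ((4 * p.2.im / (wDef p) ^ 2 : ℝ) : ℂ) := by
    have hEq : (fun y : ℝ =>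
          ((deriv (KofV ((p.2.re : ℂ) + (y : ℂ) * Complex.I)) (2 * p.1.re) : ℝ) : ℂ))
        =ᶠ[nhds p.2.im]
          fun y : ℝ => (((2 * p.1.re - 2 * (p.2.re ^ 2 + y ^ 2))⁻¹ : ℝ) : ℂ) := by
      filter_upwards [evy (2 * p.1.re) p.2.re p.2.im hpos] with y hy
      rw [deriv_KofV _ _ (by rw [Complex.normSq_add_mul_I]; exact hy.ne'),
        Complex.normSq_add_mul_I]
    rw [hEq.deriv_eq, hw]
    exact ((hinvy _ _ _ hpos).ofReal_comp).deriv
  rw [hDx, hDy]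
  push_cast
  ring

lemma inner_val (v : ℝ) (u : ℂ) (h : 0 < v - 2 * Complex.normSq u) :
    wirtD (fun u : ℂ => ((Real.log (v - 2 * Complex.normSq u) : ℝ) : ℂ)) u =
      -2 * ((u.re : ℂ) - (u.im : ℂ) * Complex.I) * (((v - 2 * Complex.normSq u)⁻¹ : ℝ) : ℂ) := by
  have hn : Complex.normSq u = u.re ^ 2 + u.im ^ 2 := by
    rw [Complex.normSq_apply]; ring
  have hpos : 0 < v - 2 * (u.re ^ 2 + u.im ^ 2) := by rw [← hn]; exact h
  simp only [wirtD, Complex.normSq_add_mul_I]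
  rw [((hlogx v u.im u.re hpos).ofReal_comp).deriv,
    ((hlogy v u.re u.im hpos).ofReal_comp).deriv, hn]
  push_cast
  ring

lemma K22bar_eq (p : ℂ × ℂ) (hp : 0 < wDef p) :
    K22bar p = ((-2 / wDef p - 4 * Complex.normSq p.2 / (wDef p) ^ 2 : ℝ) : ℂ) := by
  have hw : wDef p = 2 * p.1.re - 2 * (p.2.re ^ 2 + p.2.im ^ 2) := by
    simp only [wDef, Complex.normSq_apply]; ring
  have hpos : 0 < 2 * p.1.re - 2 * (p.2.re ^ 2 + p.2.im ^ 2) := hw ▸ hp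
  simp only [K22bar, wirtDbar]
  have hb : HasDerivAt (fun x : ℝ => ((x : ℝ) : ℂ)) 1 p.2.re := by
    simpa using (hasDerivAt_id p.2.re).ofReal_comp
  have hb' : HasDerivAt (fun y : ℝ => ((y : ℝ) : ℂ)) 1 p.2.im := by
    simpa using (hasDerivAt_id p.2.im).ofReal_comp
  have hDx : deriv (fun x : ℝ =>
        wirtD (fun u => ((Real.log (2 * p.1.re - 2 * Complex.normSq u) : ℝ) : ℂ))
          ((x : ℂ) + (p.2.im : ℂ) * Complex.I)) p.2.re
      = (-2 : ℂ) * (((2 * p.1.re - 2 * (p.2.re ^ 2 + p.2.im ^ 2))⁻¹ : ℝ) : ℂ)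
        + (-2 * ((p.2.re : ℂ) - (p.2.im : ℂ) * Complex.I))
          * ((4 * p.2.re / (2 * p.1.re - 2 * (p.2.re ^ 2 + p.2.im ^ 2)) ^ 2 : ℝ) : ℂ) := by
    have hEq : (fun x : ℝ =>
          wirtD (fun u => ((Real.log (2 * p.1.re - 2 * Complex.normSq u) : ℝ) : ℂ))
            ((x : ℂ) + (p.2.im : ℂ) * Complex.I))
        =ᶠ[nhds p.2.re]
          fun x : ℝ => -2 * ((x : ℂ) - (p.2.im : ℂ) * Complex.I)
            * (((2 * p.1.re - 2 * (x ^ 2 + p.2.im ^ 2))⁻¹ : ℝ) : ℂ) := by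
      filter_upwards [evx (2 * p.1.re) p.2.im p.2.re hpos] with x hx
      have h' : 0 < 2 * p.1.re - 2 * Complex.normSq ((x : ℂ) + (p.2.im : ℂ) * Complex.I) := by
        rw [Complex.normSq_add_mul_I]; exact hx
      rw [inner_val _ _ h']
      simp [Complex.normSq_add_mul_I]
    rw [hEq.deriv_eq]
    have h1 : HasDerivAt (fun x : ℝ => -2 * ((x : ℂ) - (p.2.im : ℂ) * Complex.I))
        (-2) p.2.re := by
      have h := (hb.sub_const ((p.2.im : ℂ) * Complex.I)).const_mul (-2 : ℂ)
      refine h.congr_deriv ?_; ring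
    have h2 := (hinvx (2 * p.1.re) p.2.im p.2.re hpos).ofReal_comp
    exact (h1.mul h2).deriv
  have hDy : deriv (fun y : ℝ =>
        wirtD (fun u => ((Real.log (2 * p.1.re - 2 * Complex.normSq u) : ℝ) : ℂ))
          ((p.2.re : ℂ) + (y : ℂ) * Complex.I)) p.2.im
      = (2 * Complex.I) * (((2 * p.1.re - 2 * (p.2.re ^ 2 + p.2.im ^ 2))⁻¹ : ℝ) : ℂ)
        + (-2 * ((p.2.re : ℂ) - (p.2.im : ℂ) * Complex.I))
          * ((4 * p.2.im / (2 * p.1.re - 2 * (p.2.re ^ 2 + p.2.im ^ 2)) ^ 2 : ℝ) : ℂ) := by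
    have hEq : (fun y : ℝ =>
          wirtD (fun u => ((Real.log (2 * p.1.re - 2 * Complex.normSq u) : ℝ) : ℂ))
            ((p.2.re : ℂ) + (y : ℂ) * Complex.I))
        =ᶠ[nhds p.2.im]
          fun y : ℝ => -2 * ((p.2.re : ℂ) - (y : ℂ) * Complex.I)
            * (((2 * p.1.re - 2 * (p.2.re ^ 2 + y ^ 2))⁻¹ : ℝ) : ℂ) := by
      filter_upwards [evy (2 * p.1.re) p.2.re p.2.im hpos] with y hy
      have h' : 0 < 2 * p.1.re - 2 * Complex.normSq ((p.2.re : ℂ) + (y : ℂ) * Complex.I) := by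
        rw [Complex.normSq_add_mul_I]; exact hy
      rw [inner_val _ _ h']
      simp [Complex.normSq_add_mul_I]
    rw [hEq.deriv_eq]
    have h1 : HasDerivAt (fun y : ℝ => -2 * ((p.2.re : ℂ) - (y : ℂ) * Complex.I))
        (2 * Complex.I) p.2.im := by
      have h := ((hb'.mul_const Complex.I).const_sub ((p.2.re : ℂ))).const_mul (-2 : ℂ)
      refine h.congr_deriv ?_; ring
    have h2 := (hinvy (2 * p.1.re) p.2.re p.2.im hpos).ofReal_comp
    exact (h1.mul h2).deriv
  rw [hDx, hDy, hw, Complex.normSq_apply]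
  push_cast
  linear_combination ((2 * (p.1.re : ℂ) - 2 * ((p.2.re : ℂ) ^ 2 + (p.2.im : ℂ) ^ 2))⁻¹
    + 4 * (p.2.im : ℂ) ^ 2 / (2 * (p.1.re : ℂ) - 2 * ((p.2.re : ℂ) ^ 2 + (p.2.im : ℂ) ^ 2)) ^ 2)
    * Complex.I_sq

end PrzAux

/-- `K = log(v − 2z₂z̄₂)` depends on `z₁` only through `v`, and on
`U'` it satisfies `K_v e^K = 1`, `K_v > 0`, `K_vv < 0` (so `εK_vv > 0` with `ε = −1`),
and the Przanowski equation
`K_vv K_{22̄} − K_{v2̄} K_{v2} − 2e^{−K}(K_vv + 2(K_v)²) = 0`. -/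
theorem KDef_properties :
    (∀ z₁ z₁' z₂ : ℂ, z₁ + starRingEnd ℂ z₁ = z₁' + starRingEnd ℂ z₁' →
      KDef (z₁, z₂) = KDef (z₁', z₂)) ∧
    (∀ p ∈ Uprime, Kv p * Real.exp (KDef p) = 1) ∧
    (∀ p ∈ Uprime, 0 < Kv p) ∧
    (∀ p ∈ Uprime, Kvv p < 0 ∧ 0 < (-1 : ℝ) * Kvv p) ∧
    (∀ p ∈ Uprime,
      (Kvv p : ℂ) * K22bar p - Kv2bar p * Kv2 p -
        2 * Complex.exp (-(KDef p : ℂ)) * ((Kvv p : ℂ) + 2 * (Kv p : ℂ) ^ 2) = 0) := by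
  refine ⟨?_, ?_, ?_, ?_, ?_⟩
  · intro z₁ z₁' z₂ h
    rw [Complex.add_conj, Complex.add_conj] at h
    have h2 : z₁.re = z₁'.re := by
      have := Complex.ofReal_inj.mp h; linarith
    simp [KDef, wDef, h2]
  · intro p hp
    have hp' : 0 < wDef p := hp
    rw [PrzAux.Kv_eq p hp', KDef, Real.exp_log hp']
    exact inv_mul_cancel₀ hp'.ne'
  · intro p hp
    have hp' : 0 < wDef p := hp
    rw [PrzAux.Kv_eq p hp']
    positivity
  · intro p hp
    have hp' : 0 < wDef p := hp
    rw [PrzAux.Kvv_eq p hp']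
    have hposi : 0 < ((wDef p) ^ 2)⁻¹ := by positivity
    constructor
    · linarith
    · linarith
  · intro p hp
    have hp' : 0 < wDef p := hp
    have he : Complex.exp (-(KDef p : ℂ)) = (((wDef p)⁻¹ : ℝ) : ℂ) := by
      have h1 : (-(KDef p : ℂ)) = ((-KDef p : ℝ) : ℂ) := by push_cast; ring
      rw [h1, ← Complex.ofReal_exp]
      simp only [KDef]
      rw [Real.exp_neg, Real.exp_log hp']
    rw [PrzAux.Kv_eq p hp', PrzAux.Kvv_eq p hp', PrzAux.Kv2_eq p hp',
      PrzAux.Kv2bar_eq p hp', PrzAux.K22bar_eq p hp', he, Complex.normSq_apply]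
    push_cast
    linear_combination (4 * (p.2.im : ℂ) ^ 2 / ((wDef p : ℝ) : ℂ) ^ 4) * Complex.I_sq
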